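/- Fix M, N, d ∈ ℕ with M, N ≥ 1 and d ≥ M + N. Let x⁽¹⁾, …, x⁽ᴹ⁾, y⁽¹⁾, …, y⁽ᴺ⁾ be random vectors in ℝ^d whose d·(M+N) coordinates are drawn independently and identically from the uniform distribution on [−1, 1]. Then, almost surely, the pair ({x⁽¹⁾, …, x⁽ᴹ⁾}, {y⁽¹⁾, …, y⁽ᴺ⁾}) is convexly separable. -/

import Mathlib

open MeasureTheory

/-- An ordered pair `(X₁, X₂)` of subsets of ℝ^d is *convexly separable* if there exists a
nonempty closed convex set `X ⊆ ℝ^d` such that `X₂ ⊆ X` and `X₁ ⊆ ℝ^d \ X`. -/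
def ConvexlySeparable {d : ℕ} (X₁ X₂ : Set (EuclideanSpace ℝ (Fin d))) : Prop :=
  ∃ X : Set (EuclideanSpace ℝ (Fin d)),
    X.Nonempty ∧ IsClosed X ∧ Convex ℝ X ∧ X₂ ⊆ X ∧ X₁ ⊆ Xᶜ

/-- The uniform probability distribution on the interval `[-1, 1] ⊆ ℝ`. -/
noncomputable def uniformIcc : Measure ℝ :=
  (volume (Set.Icc (-1 : ℝ) 1))⁻¹ • volume.restrict (Set.Icc (-1 : ℝ) 1)

lemma uniformIcc_univ : uniformIcc Set.univ = 1 := by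
  simp only [uniformIcc, Measure.smul_apply, Measure.restrict_apply MeasurableSet.univ,
    Set.univ_inter, smul_eq_mul, Real.volume_Icc]
  rw [show (1 : ℝ) - (-1) = 2 by norm_num, ENNReal.inv_mul_cancel] <;> simp

instance : IsProbabilityMeasure uniformIcc := ⟨uniformIcc_univ⟩

lemma uniformIcc_le_volume : uniformIcc ≤ (volume : Measure ℝ) := by
  refine Measure.le_iff'.mpr fun s => ?_
  rw [uniformIcc, Measure.smul_apply, smul_eq_mul]
  calc (volume (Set.Icc (-1:ℝ) 1))⁻¹ * volume.restrict (Set.Icc (-1:ℝ) 1) s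
      ≤ 1 * volume s := by
        gcongr
        · rw [Real.volume_Icc, ENNReal.inv_le_one]
          rw [show (1 : ℝ) - (-1) = 2 by norm_num]
          exact ENNReal.one_le_ofReal.mpr (by norm_num)
        · exact Measure.restrict_le_self
    _ = volume s := one_mul _

lemma pi_apply_mono {ι : Type*} [Fintype ι] {α : ι → Type*} [∀ i, MeasurableSpace (α i)]
    (μ ν : ∀ i, Measure (α i)) (h : ∀ i, μ i ≤ ν i) {s : Set (∀ i, α i)}
    (hs : MeasurableSet s) : Measure.pi μ s ≤ Measure.pi ν s := by
  rw [Measure.pi_def, Measure.pi_def, toMeasure_apply _ _ hs, toMeasure_apply _ _ hs]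
  refine OuterMeasure.le_pi.mpr (fun t _ => ?_) s
  exact (OuterMeasure.pi_pi_le _ t).trans
    (Finset.prod_le_prod' fun i _ => Measure.le_iff'.1 (h i) _)

lemma mem_convexHull_range_iff {E : Type*} [AddCommGroup E] [Module ℝ E] {n : ℕ}
    (v : Fin n → E) (x : E) :
    x ∈ convexHull ℝ (Set.range v) ↔
      ∃ w : Fin n → ℝ, (∀ j, 0 ≤ w j) ∧ ∑ j, w j = 1 ∧ ∑ j, w j • v j = x := by
  rw [convexHull_range_eq_exists_affineCombination]
  constructor
  · rintro ⟨s, w, h0, h1, rfl⟩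
    refine ⟨fun j => if j ∈ s then w j else 0, ?_, ?_, ?_⟩
    · intro j; dsimp only; split_ifs with hj
      exacts [h0 j hj, le_refl 0]
    · rw [Finset.sum_ite_mem, Finset.univ_inter, h1]
    · rw [Finset.affineCombination_eq_linear_combination _ _ _ h1]
      simp [ite_smul, Finset.sum_ite_mem]
  · rintro ⟨w, h0, h1, rfl⟩
    exact ⟨Finset.univ, w, fun j _ => h0 j, h1, by
      rw [Finset.affineCombination_eq_linear_combination _ _ _ h1]⟩

lemma measurableSet_memHull {n d : ℕ} :
    MeasurableSet {q : (Fin d → ℝ) × (Fin n → Fin d → ℝ) | q.1 ∈ convexHull ℝ (Set.range q.2)} := by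
  have hF : Continuous (fun p : (Fin n → ℝ) × (Fin n → Fin d → ℝ) =>
      ((∑ j, p.1 j • p.2 j, p.2) : (Fin d → ℝ) × (Fin n → Fin d → ℝ))) := by
    refine Continuous.prodMk ?_ continuous_snd
    exact continuous_finset_sum _ fun j _ =>
      ((continuous_apply j).comp continuous_fst).smul ((continuous_apply j).comp continuous_snd)
  have hset : {q : (Fin d → ℝ) × (Fin n → Fin d → ℝ) | q.1 ∈ convexHull ℝ (Set.range q.2)} =
      ⋃ m : ℕ, (fun p : (Fin n → ℝ) × (Fin n → Fin d → ℝ) => (∑ j, p.1 j • p.2 j, p.2)) ''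
        ((stdSimplex ℝ (Fin n)) ×ˢ Metric.closedBall 0 m) := by
    ext ⟨x, v⟩
    simp only [Set.mem_setOf_eq, Set.mem_iUnion, Set.mem_image, Set.mem_prod, Prod.exists]
    constructor
    · intro hx
      obtain ⟨w, h0, h1, h2⟩ := (mem_convexHull_range_iff v x).1 hx
      exact ⟨⌈‖v‖⌉₊, w, v, ⟨⟨h0, h1⟩, by
        simpa [Metric.mem_closedBall, dist_zero_right] using Nat.le_ceil ‖v‖⟩, by
        simp [h2]⟩
    · rintro ⟨m, w, v', ⟨⟨h0, h1⟩, -⟩, heq⟩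
      cases heq
      exact (mem_convexHull_range_iff _ _).2 ⟨w, h0, h1, rfl⟩
  rw [hset]
  exact MeasurableSet.iUnion fun m =>
    (((isCompact_stdSimplex ℝ (Fin n)).prod (isCompact_closedBall 0 m)).image hF).isClosed.measurableSet

lemma hull_null {n d : ℕ} (hnd : n < d) (v : Fin n → (Fin d → ℝ)) :
    (Measure.pi fun _ : Fin d => uniformIcc) (convexHull ℝ (Set.range v)) = 0 := by
  rcases Nat.eq_zero_or_pos n with rfl | hn
  · simp [Set.range_eq_empty]
  have hclosed : IsClosed (convexHull ℝ (Set.range v)) := (Set.finite_range v).isClosed_convexHull ℝ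
  have hvol : (volume : Measure (Fin d → ℝ)) (convexHull ℝ (Set.range v)) = 0 := by
    refine measure_mono_null (convexHull_subset_affineSpan _) ?_
    refine Measure.addHaar_affineSubspace _ _ ?_
    intro htop
    have h1 : vectorSpan ℝ (Set.range v) = ⊤ := by
      rw [← direction_affineSpan, htop, AffineSubspace.direction_top]
    have h2 : Module.finrank ℝ (vectorSpan ℝ (Set.range v)) ≤ n - 1 :=
      finrank_vectorSpan_range_le ℝ v (by simp; omega)
    rw [h1, finrank_top, Module.finrank_pi, Fintype.card_fin] at h2
    omega
  refine le_antisymm ?_ zero_le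
  calc (Measure.pi fun _ : Fin d => uniformIcc) (convexHull ℝ (Set.range v))
      ≤ (Measure.pi fun _ : Fin d => volume) (convexHull ℝ (Set.range v)) :=
        pi_apply_mono _ _ (fun _ => uniformIcc_le_volume) hclosed.measurableSet
    _ = 0 := hvol

/-- **Theorem 4 of the paper, second case**: if `d ≥ M + N` and the `d·(M+N)` coordinates of
the samples `x⁽¹⁾, …, x⁽ᴹ⁾, y⁽¹⁾, …, y⁽ᴺ⁾ ∈ ℝ^d` are i.i.d. uniform on `[-1, 1]`, then the
pair `({x⁽¹⁾, …, x⁽ᴹ⁾}, {y⁽¹⁾, …, y⁽ᴺ⁾})` is almost surely convexly separable. -/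
theorem uniform_data_convexly_separable_high_dim (M N d : ℕ)
    (hM : 1 ≤ M) (hN : 1 ≤ N) (hd : M + N ≤ d) :
    Measure.pi (fun _ : (Fin M ⊕ Fin N) × Fin d => uniformIcc)
        {ω | ConvexlySeparable
          (Set.range fun i : Fin M =>
            (WithLp.toLp 2 (fun k : Fin d => ω (Sum.inl i, k)) : EuclideanSpace ℝ (Fin d)))
          (Set.range fun j : Fin N =>
            (WithLp.toLp 2 (fun k : Fin d => ω (Sum.inr j, k)) : EuclideanSpace ℝ (Fin d)))} = 1 := by
  classical
  have hNd : N < d := by omega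
  set ι := (Fin M ⊕ Fin N) × Fin d with hι
  set μ := Measure.pi (fun _ : ι => uniformIcc) with hμdef
  let B : Fin M → Set (ι → ℝ) := fun i =>
    {ω | (fun k => ω (Sum.inl i, k)) ∈
      convexHull ℝ (Set.range fun j : Fin N => fun k : Fin d => ω (Sum.inr j, k))}
  have hB : ∀ i, μ (B i) = 0 := by
    intro i
    set p : ι → Prop := fun a => a.1 ≠ Sum.inl i with hp
    have hmp := measurePreserving_piEquivPiSubtypeProd (fun _ : ι => uniformIcc) p
    set π := MeasurableEquiv.piEquivPiSubtypeProd (fun _ : ι => ℝ) p with hπ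
    let g : ({a : ι // ¬ p a} → ℝ) → (Fin d → ℝ) := fun u k => u ⟨(Sum.inl i, k), by simp [p]⟩
    let h : ({a : ι // p a} → ℝ) → (Fin N → Fin d → ℝ) :=
      fun u j k => u ⟨(Sum.inr j, k), by simp [p]⟩
    set T : Set (({a : ι // p a} → ℝ) × ({a : ι // ¬ p a} → ℝ)) :=
      (fun q : ({a : ι // p a} → ℝ) × ({a : ι // ¬ p a} → ℝ) => (g q.2, h q.1)) ⁻¹'
        {q : (Fin d → ℝ) × (Fin N → Fin d → ℝ) | q.1 ∈ convexHull ℝ (Set.range q.2)} with hT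
    have hgm : Measurable (fun q : ({a : ι // p a} → ℝ) × ({a : ι // ¬ p a} → ℝ) => g q.2) :=
      measurable_pi_lambda _ fun k => (measurable_pi_apply _).comp measurable_snd
    have hhm : Measurable (fun q : ({a : ι // p a} → ℝ) × ({a : ι // ¬ p a} → ℝ) => h q.1) :=
      measurable_pi_lambda _ fun j => measurable_pi_lambda _ fun k =>
        (measurable_pi_apply _).comp measurable_fst
    have hTm : MeasurableSet T := measurableSet_memHull.preimage (hgm.prodMk hhm)
    have hBT : B i = π ⁻¹' T := rfl
    rw [hBT, hmp.measure_preimage hTm.nullMeasurableSet, Measure.measure_prod_null hTm]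
    refine Filter.Eventually.of_forall fun u => ?_
    show (Measure.pi fun _ : {a : ι // ¬ p a} => uniformIcc) (Prod.mk u ⁻¹' T) = 0
    have hslice : (Prod.mk u ⁻¹' T) =
        g ⁻¹' (convexHull ℝ (Set.range (h u))) := rfl
    rw [hslice]
    let e : Fin d ≃ {a : ι // ¬ p a} :=
      { toFun := fun k => ⟨(Sum.inl i, k), by simp [p]⟩
        invFun := fun a => a.1.2
        left_inv := fun k => rfl
        right_inv := by
          rintro ⟨⟨j, k⟩, hj⟩
          simp only [p, ne_eq, not_not] at hj
          subst hj
          rfl }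
    have hmp2 : MeasurePreserving
        ((MeasurableEquiv.piCongrLeft (fun _ : {a : ι // ¬ p a} => ℝ) e).symm)
        (Measure.pi fun _ : {a : ι // ¬ p a} => uniformIcc)
        (Measure.pi fun _ : Fin d => uniformIcc) :=
      (measurePreserving_piCongrLeft (fun _ : {a : ι // ¬ p a} => uniformIcc) e).symm _
    have hge : g = ⇑((MeasurableEquiv.piCongrLeft (fun _ : {a : ι // ¬ p a} => ℝ) e).symm) := by
      funext u k
      simp [MeasurableEquiv.piCongrLeft, g, e]
    rw [hge, hmp2.measure_preimage]
    · exact hull_null hNd (h u)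
    · exact (((Set.finite_range (h u)).isClosed_convexHull ℝ).measurableSet).nullMeasurableSet
  have hUnion : μ (⋃ i, B i) = 0 := measure_iUnion_null hB
  have hmain : (⋃ i, B i)ᶜ ⊆ {ω : ι → ℝ | ConvexlySeparable
      (Set.range fun i : Fin M =>
        (WithLp.toLp 2 (fun k : Fin d => ω (Sum.inl i, k)) : EuclideanSpace ℝ (Fin d)))
      (Set.range fun j : Fin N =>
        (WithLp.toLp 2 (fun k : Fin d => ω (Sum.inr j, k)) : EuclideanSpace ℝ (Fin d)))} := by
    intro ω hω
    have hω' : ∀ i, ω ∉ B i := by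
      intro i hi
      exact hω (Set.mem_iUnion.2 ⟨i, hi⟩)
    refine ⟨convexHull ℝ (Set.range fun j : Fin N =>
      (WithLp.toLp 2 (fun k : Fin d => ω (Sum.inr j, k)) : EuclideanSpace ℝ (Fin d))), ?_, ?_,
      convex_convexHull _ _, subset_convexHull _ _, ?_⟩
    · haveI : Nonempty (Fin N) := ⟨⟨0, hN⟩⟩
      exact (Set.range_nonempty _).mono (subset_convexHull _ _)
    · exact (Set.finite_range _).isClosed_convexHull ℝ
    · rintro x ⟨i, rfl⟩ hx
      obtain ⟨w, h0, h1, h2⟩ := (mem_convexHull_range_iff _ _).1 hx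
      refine hω' i ((mem_convexHull_range_iff _ _).2 ⟨w, h0, h1, ?_⟩)
      have := congrArg WithLp.ofLp h2
      simpa using this
  haveI : IsProbabilityMeasure μ := by
    constructor
    rw [hμdef, Measure.pi_univ]
    simp [uniformIcc_univ]
  have h2 : (1 : ENNReal) ≤ μ ((⋃ i, B i)ᶜ) := by
    have hle := measure_union_le (μ := μ) ((⋃ i, B i)ᶜ) (⋃ i, B i)
    rw [Set.compl_union_self, hUnion, add_zero, measure_univ] at hle
    exact hle
  refine le_antisymm prob_le_one (h2.trans (measure_mono hmain))
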